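/- Let n ≥ 1 and let K_{1,n} be the star graph consisting of one central vertex adjacent to n leaves (on n + 1 vertices). For every real s, the characteristic polynomial of the deformed Laplacian M_{K_{1,n}}(s) factors as charpoly(M_{K_{1,n}}(s)) = (X - 1)^{n-1} · ( X^2 - (s^2·(n - 1) + 2)·X + (1 - s^2) ). Consequently the spectrum of M_{K_{1,n}}(s) consists of the eigenvalue 1 with multiplicity n - 1 together with the two numbers (1/2)·( s^2·(n-1) + 2 ± √( s^2·( s^2·(n-1)^2 + 4n ) ) ). -/

import Mathlib

open scoped Classical
open Matrix Polynomial

/-- The deformed Laplacian matrix `M_G(s) = I - s·A(G) + s²·(D(G) - I)` of a finite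
simple graph `G`. -/
noncomputable def deformedLap {V : Type*} [Fintype V] (G : SimpleGraph V) (s : ℝ) :
    Matrix V V ℝ :=
  1 - s • G.adjMatrix ℝ + s ^ 2 • (Matrix.diagonal (fun v => (G.degree v : ℝ)) - 1)

/-- The star `K_{1,n}`: vertex `0` of `Fin (n+1)` is adjacent to the `n` other
vertices, and there are no further edges. -/
def starGraph (n : ℕ) : SimpleGraph (Fin (n + 1)) where
  Adj i j := i ≠ j ∧ (i = 0 ∨ j = 0)
  symm := ⟨fun i j h => ⟨h.1.symm, h.2.symm⟩⟩
  loopless := ⟨fun i h => h.1 rfl⟩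

lemma star_adj {n : ℕ} (i j : Fin (n+1)) :
    (starGraph n).Adj i j ↔ i ≠ j ∧ (i = 0 ∨ j = 0) := Iff.rfl

lemma star_degree (n : ℕ) (v : Fin (n + 1)) :
    (starGraph n).degree v = if v = 0 then n else 1 := by
  rw [SimpleGraph.degree]
  by_cases hv : v = 0
  · subst hv
    rw [if_pos rfl]
    have h : (starGraph n).neighborFinset 0 = Finset.univ.erase 0 := by
      ext j
      simp [SimpleGraph.mem_neighborFinset, star_adj, ne_comm, eq_comm]
    rw [h, Finset.card_erase_of_mem (Finset.mem_univ _), Finset.card_univ, Fintype.card_fin]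
    omega
  · rw [if_neg hv]
    have h : (starGraph n).neighborFinset v = {0} := by
      ext j
      simp only [SimpleGraph.mem_neighborFinset, star_adj, Finset.mem_singleton]
      constructor
      · rintro ⟨hne, h0 | h0⟩
        · exact absurd h0 hv
        · exact h0
      · rintro rfl
        exact ⟨hv, Or.inr rfl⟩
    rw [h, Finset.card_singleton]

lemma M_apply (n : ℕ) (s : ℝ) (i j : Fin (n + 1)) :
    deformedLap (starGraph n) s i j =
      if i = j then (if i = 0 then 1 + s ^ 2 * ((n : ℝ) - 1) else 1)
      else if i = 0 ∨ j = 0 then -s else 0 := by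
  simp only [deformedLap, Matrix.sub_apply, Matrix.add_apply, Matrix.smul_apply,
    Matrix.one_apply, SimpleGraph.adjMatrix_apply, Matrix.diagonal_apply, star_adj,
    star_degree, smul_eq_mul]
  by_cases h : i = j
  · subst h
    by_cases h0 : i = 0 <;> simp [h0] <;> ring
  · by_cases h0 : i = 0 ∨ j = 0 <;> simp [h, h0] <;> ring

lemma det_block {F : Type*} [Field F] (n : ℕ) (hn : 1 ≤ n) (a b d : F) (hd : d ≠ 0) :
    (Matrix.fromBlocks
      (Matrix.of fun (_ : Fin 1) (_ : Fin 1) => a)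
      (Matrix.of fun (_ : Fin 1) (_ : Fin n) => b)
      (Matrix.of fun (_ : Fin n) (_ : Fin 1) => b)
      (d • (1 : Matrix (Fin n) (Fin n) F))).det
    = d ^ (n - 1) * (a * d - n * b ^ 2) := by
  have h1 : (d • (1 : Matrix (Fin n) (Fin n) F)) * (d⁻¹ • 1) = 1 := by
    rw [smul_mul_smul_comm, one_mul, mul_inv_cancel₀ hd, one_smul]
  haveI : Invertible (d • (1 : Matrix (Fin n) (Fin n) F)) :=
    invertibleOfRightInverse _ _ h1
  rw [Matrix.det_fromBlocks₂₂]
  have hInv : ⅟(d • (1 : Matrix (Fin n) (Fin n) F)) = d⁻¹ • 1 := by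
    rw [Matrix.invOf_eq_nonsing_inv, Matrix.inv_eq_right_inv h1]
  rw [hInv]
  have hBC : (Matrix.of fun (_ : Fin 1) (_ : Fin n) => b) * (d⁻¹ • (1 : Matrix (Fin n) (Fin n) F))
      * (Matrix.of fun (_ : Fin n) (_ : Fin 1) => b)
      = Matrix.of fun (_ : Fin 1) (_ : Fin 1) => d⁻¹ * ((n : F) * b ^ 2) := by
    rw [Matrix.mul_smul, Matrix.mul_one, Matrix.smul_mul]
    ext i j
    simp [Matrix.mul_apply, Finset.sum_const, Finset.card_univ, mul_comm, sq, mul_assoc,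
      mul_left_comm]
  rw [hBC, Matrix.det_smul, Matrix.det_one, Matrix.det_fin_one]
  simp only [Matrix.sub_apply, Matrix.of_apply, Fintype.card_fin, mul_one]
  have hpow : d ^ n = d ^ (n - 1) * d := by
    rw [← pow_succ]
    congr 1
    omega
  rw [hpow]
  field_simp

lemma quad_factor (T P r₁ r₂ : ℝ) (hsum : r₁ + r₂ = T) (hprod : r₁ * r₂ = P) :
    (X : ℝ[X]) ^ 2 - C T * X + C P = (X - C r₁) * (X - C r₂) := by
  rw [← hsum, ← hprod, Polynomial.C_add, Polynomial.C_mul]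
  ring

/-- Characteristic polynomial of the deformed Laplacian of the star `K_{1,n}`:
it factors as `(X-1)^{n-1}·(X² - (s²(n-1)+2)X + (1-s²))`, so the spectrum is `1`
with multiplicity `n-1` together with
`(1/2)(s²(n-1)+2 ± √(s²(s²(n-1)²+4n)))`. -/
theorem stmt_13 (n : ℕ) (hn : 1 ≤ n) (s : ℝ) :
    (deformedLap (starGraph n) s).charpoly
        = (X - 1) ^ (n - 1)
          * (X ^ 2 - C (s ^ 2 * ((n : ℝ) - 1) + 2) * X + C (1 - s ^ 2))
    ∧ (deformedLap (starGraph n) s).charpoly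
        = (X - 1) ^ (n - 1)
          * (X - C ((1 / 2) * (s ^ 2 * ((n : ℝ) - 1) + 2
              + Real.sqrt (s ^ 2 * (s ^ 2 * ((n : ℝ) - 1) ^ 2 + 4 * (n : ℝ))))))
          * (X - C ((1 / 2) * (s ^ 2 * ((n : ℝ) - 1) + 2
              - Real.sqrt (s ^ 2 * (s ^ 2 * ((n : ℝ) - 1) ^ 2 + 4 * (n : ℝ)))))) := by
  -- abbreviations in ℝ[X]
  set a : ℝ[X] := X - C (1 + s ^ 2 * ((n : ℝ) - 1)) with ha
  set d : ℝ[X] := X - 1 with hdd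
  set b : ℝ[X] := C s with hb
  have hquad : X ^ 2 - C (s ^ 2 * ((n : ℝ) - 1) + 2) * X + C (1 - s ^ 2)
      = a * d - (n : ℝ[X]) * b ^ 2 := by
    have hnC : ((n : ℝ[X])) = C ((n : ℝ)) := by
      simp [Polynomial.C_eq_natCast]
    rw [ha, hdd, hb, hnC]
    simp only [_root_.map_add, _root_.map_sub, _root_.map_mul, _root_.map_one,
      _root_.map_pow, _root_.map_ofNat]
    ring
  have key : (deformedLap (starGraph n) s).charpoly
      = (X - 1) ^ (n - 1)
        * (X ^ 2 - C (s ^ 2 * ((n : ℝ) - 1) + 2) * X + C (1 - s ^ 2)) := by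
    -- the reindexing equivalence
    let e : Fin 1 ⊕ Fin n ≃ Fin (n + 1) :=
      finSumFinEquiv.trans (finCongr (by omega))
    have he0 : ∀ i : Fin 1, e (Sum.inl i) = 0 := by
      intro i
      fin_cases i
      rfl
    have heinr : ∀ j : Fin n, (e (Sum.inr j) : Fin (n+1)) ≠ 0 := by
      intro j h
      have hv : (e (Sum.inr j)).val = 1 + j.val := rfl
      rw [h, Fin.val_zero] at hv
      omega
    have hdet : (charmatrix (deformedLap (starGraph n) s)).submatrix e e
        = Matrix.fromBlocks
            (Matrix.of fun (_ : Fin 1) (_ : Fin 1) => a)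
            (Matrix.of fun (_ : Fin 1) (_ : Fin n) => b)
            (Matrix.of fun (_ : Fin n) (_ : Fin 1) => b)
            (d • (1 : Matrix (Fin n) (Fin n) ℝ[X])) := by
      ext i j
      rcases i with i | i <;> rcases j with j | j
      · have hi := he0 i
        have hj := he0 j
        simp only [Matrix.submatrix_apply, hi, hj, Matrix.fromBlocks_apply₁₁, Matrix.of_apply]
        rw [charmatrix_apply_eq, M_apply]
        simp [ha]
      · have hi := he0 i
        have hj := heinr j
        have hne : e (Sum.inl i) ≠ e (Sum.inr j) := by rw [hi]; exact fun h => hj h.symm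
        simp only [Matrix.submatrix_apply, Matrix.fromBlocks_apply₁₂, Matrix.of_apply]
        rw [charmatrix_apply_ne _ _ _ hne, M_apply]
        rw [if_neg (by rw [hi]; exact fun h => hj h.symm), if_pos (Or.inl hi)]
        simp [hb]
      · have hi := heinr i
        have hj := he0 j
        have hne : e (Sum.inr i) ≠ e (Sum.inl j) := by rw [hj]; exact hi
        simp only [Matrix.submatrix_apply, Matrix.fromBlocks_apply₂₁, Matrix.of_apply]
        rw [charmatrix_apply_ne _ _ _ hne, M_apply]
        rw [if_neg (by rw [hj]; exact hi), if_pos (Or.inr hj)]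
        simp [hb]
      · by_cases hij : i = j
        · subst hij
          simp only [Matrix.submatrix_apply, Matrix.fromBlocks_apply₂₂, Matrix.smul_apply,
            Matrix.one_apply_eq, smul_eq_mul, mul_one]
          rw [charmatrix_apply_eq, M_apply]
          rw [if_pos rfl, if_neg (heinr i)]
          simp [hdd]
        · have hne : e (Sum.inr i) ≠ e (Sum.inr j) := by
            intro h
            exact hij (Sum.inr.inj (e.injective h))
          simp only [Matrix.submatrix_apply, Matrix.fromBlocks_apply₂₂, Matrix.smul_apply,
            Matrix.one_apply_ne hij, smul_eq_mul, mul_zero]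
          rw [charmatrix_apply_ne _ _ _ hne, M_apply]
          rw [if_neg hne, if_neg]
          · simp
          · push_neg
            exact ⟨heinr i, heinr j⟩
    have hdet2 : (deformedLap (starGraph n) s).charpoly
        = (Matrix.fromBlocks
            (Matrix.of fun (_ : Fin 1) (_ : Fin 1) => a)
            (Matrix.of fun (_ : Fin 1) (_ : Fin n) => b)
            (Matrix.of fun (_ : Fin n) (_ : Fin 1) => b)
            (d • (1 : Matrix (Fin n) (Fin n) ℝ[X]))).det := by
      rw [Matrix.charpoly, ← Matrix.det_submatrix_equiv_self e, hdet]
    -- pass to the fraction field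
    set F := FractionRing ℝ[X]
    set φ := algebraMap ℝ[X] F with hφ
    have hinj : Function.Injective φ := IsFractionRing.injective ℝ[X] F
    have hd0 : φ d ≠ 0 := by
      rw [map_ne_zero_iff φ hinj, hdd]
      have := Polynomial.X_sub_C_ne_zero (1 : ℝ)
      simpa using this
    apply hinj
    rw [hdet2, RingHom.map_det]
    have hmap : φ.mapMatrix (Matrix.fromBlocks
            (Matrix.of fun (_ : Fin 1) (_ : Fin 1) => a)
            (Matrix.of fun (_ : Fin 1) (_ : Fin n) => b)
            (Matrix.of fun (_ : Fin n) (_ : Fin 1) => b)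
            (d • (1 : Matrix (Fin n) (Fin n) ℝ[X])))
        = Matrix.fromBlocks
            (Matrix.of fun (_ : Fin 1) (_ : Fin 1) => φ a)
            (Matrix.of fun (_ : Fin 1) (_ : Fin n) => φ b)
            (Matrix.of fun (_ : Fin n) (_ : Fin 1) => φ b)
            (φ d • (1 : Matrix (Fin n) (Fin n) F)) := by
      ext i j
      rcases i with i | i <;> rcases j with j | j <;>
        simp [Matrix.map_apply, Matrix.one_apply, apply_ite φ]
    rw [hmap, det_block n hn _ _ _ hd0]
    rw [_root_.map_mul, hquad, ← hdd]
    simp only [_root_.map_sub, _root_.map_mul, _root_.map_pow, map_natCast, _root_.map_one]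
  refine ⟨key, ?_⟩
  rw [key, mul_assoc]
  congr 1
  have hΔ : (0 : ℝ) ≤ s ^ 2 * (s ^ 2 * ((n : ℝ) - 1) ^ 2 + 4 * (n : ℝ)) := by positivity
  have hR : Real.sqrt (s ^ 2 * (s ^ 2 * ((n : ℝ) - 1) ^ 2 + 4 * (n : ℝ))) ^ 2
      = s ^ 2 * (s ^ 2 * ((n : ℝ) - 1) ^ 2 + 4 * (n : ℝ)) := Real.sq_sqrt hΔ
  have hsum : (1 / 2) * (s ^ 2 * ((n : ℝ) - 1) + 2
        + Real.sqrt (s ^ 2 * (s ^ 2 * ((n : ℝ) - 1) ^ 2 + 4 * (n : ℝ))))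
      + (1 / 2) * (s ^ 2 * ((n : ℝ) - 1) + 2
        - Real.sqrt (s ^ 2 * (s ^ 2 * ((n : ℝ) - 1) ^ 2 + 4 * (n : ℝ))))
      = s ^ 2 * ((n : ℝ) - 1) + 2 := by ring
  have hprod : (1 / 2) * (s ^ 2 * ((n : ℝ) - 1) + 2
        + Real.sqrt (s ^ 2 * (s ^ 2 * ((n : ℝ) - 1) ^ 2 + 4 * (n : ℝ))))
      * ((1 / 2) * (s ^ 2 * ((n : ℝ) - 1) + 2
        - Real.sqrt (s ^ 2 * (s ^ 2 * ((n : ℝ) - 1) ^ 2 + 4 * (n : ℝ)))))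
      = 1 - s ^ 2 := by
    nlinarith [hR]
  exact quad_factor _ _ _ _ hsum hprod
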